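/- Let n ≥ 1, let γ be a nonzero real number, and let C : Fin n → Fin n → ℝ. Define M : Matrix (Fin n) (Fin n) ℂ by M j k = exp(−i γ (C j k)). Then the rank of M equals 1 if and only if there exist functions α, β : Fin n → ℝ such that for all j, k there exists an integer z with C j k = α j + β k + z · (2π/γ); equivalently, rank M = 1 iff M j k factors as a(j)·b(k) for some functions a, b : Fin n → ℂ. -/

import Mathlib

open Matrix

/-- Diagonal-entangler criterion: the phase matrix `M j k = e^{-iγ C(j,k)}` has
rank `1` iff the cost table `C` is additive modulo `2π/γ`, equivalently iff `M`
factors as `a(j)·b(k)`. -/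
theorem diagonal_entangler_criterion (n : ℕ) (hn : 1 ≤ n) (γ : ℝ) (hγ : γ ≠ 0)
    (C : Fin n → Fin n → ℝ)
    (M : Matrix (Fin n) (Fin n) ℂ)
    (hM : ∀ j k, M j k = Complex.exp (-(Complex.I * γ * (C j k)))) :
    (M.rank = 1 ↔ ∃ α β : Fin n → ℝ, ∀ j k, ∃ z : ℤ,
        C j k = α j + β k + z * (2 * Real.pi / γ)) ∧
    (M.rank = 1 ↔ ∃ a b : Fin n → ℂ, ∀ j k, M j k = a j * b k) := by
  haveI : NeZero n := ⟨by omega⟩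
  have hγ' : (γ : ℂ) ≠ 0 := Complex.ofReal_ne_zero.mpr hγ
  have hMne : ∀ j k, M j k ≠ 0 := fun j k => by rw [hM]; exact Complex.exp_ne_zero _
  -- columns are in the range of `mulVecLin`
  have hcolmem : ∀ k : Fin n, (fun j => M j k) ∈ LinearMap.range M.mulVecLin := by
    intro k
    refine ⟨Pi.single k 1, ?_⟩
    rw [Matrix.mulVecLin_apply, Matrix.mulVec_single_one]
    rfl
  -- factorization → rank = 1
  have factor_rank : (∃ a b : Fin n → ℂ, ∀ j k, M j k = a j * b k) → M.rank = 1 := by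
    rintro ⟨a, b, hab⟩
    have hMeq : M = replicateCol Unit a * replicateRow Unit b := by
      rw [← vecMulVec_eq]
      ext j k
      rw [vecMulVec_apply, hab]
    have hle : M.rank ≤ 1 := by
      rw [hMeq]
      calc (replicateCol Unit a * replicateRow Unit b).rank ≤ (replicateCol Unit a).rank := rank_mul_le_left _ _
        _ ≤ Fintype.card Unit := rank_le_card_width _
        _ = 1 := Fintype.card_unit
    have hne : M.rank ≠ 0 := by
      intro h0
      have hbot : LinearMap.range M.mulVecLin = ⊥ := Submodule.finrank_eq_zero.mp h0
      have hmem := hcolmem 0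
      rw [hbot, Submodule.mem_bot] at hmem
      exact hMne 0 0 (congrFun hmem 0)
    omega
  -- rank = 1 → factorization
  have rank_factor : M.rank = 1 → ∃ a b : Fin n → ℂ, ∀ j k, M j k = a j * b k := by
    intro h1
    have h1' : Module.finrank ℂ ↥(LinearMap.range M.mulVecLin) = 1 := h1
    have hvne : (⟨fun j => M j 0, hcolmem 0⟩ : LinearMap.range M.mulVecLin) ≠ 0 := by
      intro h
      have : (fun j => M j 0) = (0 : Fin n → ℂ) := congrArg Subtype.val h
      exact hMne 0 0 (congrFun this 0)
    have hcol : ∀ k : Fin n, ∃ c : ℂ, ∀ j, c * M j 0 = M j k := by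
      intro k
      obtain ⟨c, hc⟩ := exists_smul_eq_of_finrank_eq_one h1' hvne
        (⟨fun j => M j k, hcolmem k⟩ : LinearMap.range M.mulVecLin)
      refine ⟨c, fun j => ?_⟩
      have hval : c • (fun j => M j 0 : Fin n → ℂ) = fun j => M j k :=
        congrArg Subtype.val hc
      simpa using congrFun hval j
    choose c hc using hcol
    exact ⟨fun j => M j 0, c, fun j k => by rw [← hc k j]; ring⟩
  -- additivity → factorization
  have add_factor : (∃ α β : Fin n → ℝ, ∀ j k, ∃ z : ℤ,
      C j k = α j + β k + z * (2 * Real.pi / γ)) →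
      ∃ a b : Fin n → ℂ, ∀ j k, M j k = a j * b k := by
    rintro ⟨α, β, h⟩
    refine ⟨fun j => Complex.exp (-(Complex.I * γ * α j)),
      fun k => Complex.exp (-(Complex.I * γ * β k)), fun j k => ?_⟩
    obtain ⟨z, hz⟩ := h j k
    rw [hM, hz, ← Complex.exp_add, Complex.exp_eq_exp_iff_exists_int]
    refine ⟨-z, ?_⟩
    push_cast
    field_simp
    ring
  -- factorization → additivity
  have factor_add : (∃ a b : Fin n → ℂ, ∀ j k, M j k = a j * b k) →
      ∃ α β : Fin n → ℝ, ∀ j k, ∃ z : ℤ,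
        C j k = α j + β k + z * (2 * Real.pi / γ) := by
    rintro ⟨a, b, hab⟩
    refine ⟨fun j => C j 0, fun k => C 0 k - C 0 0, fun j k => ?_⟩
    have key : M j k * M 0 0 = M j 0 * M 0 k := by
      rw [hab, hab, hab, hab]; ring
    rw [hM, hM, hM, hM, ← Complex.exp_add, ← Complex.exp_add,
      Complex.exp_eq_exp_iff_exists_int] at key
    obtain ⟨m, hm⟩ := key
    refine ⟨-m, ?_⟩
    have h2 : Complex.I * (-(γ * C j k) - γ * C 0 0) =
        Complex.I * (-(γ * C j 0) - γ * C 0 k + m * (2 * Real.pi)) := by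
      linear_combination hm
    have h3 := mul_left_cancel₀ Complex.I_ne_zero h2
    have h4 : ((C j k : ℝ) : ℂ) =
        ((C j 0 + (C 0 k - C 0 0) + (-m : ℤ) * (2 * Real.pi / γ) : ℝ) : ℂ) := by
      push_cast
      field_simp
      linear_combination -h3
    exact_mod_cast h4
  exact ⟨⟨fun h => factor_add (rank_factor h), fun h => factor_rank (add_factor h)⟩,
    ⟨rank_factor, factor_rank⟩⟩
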